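/- arXiv:1006.5896 — 5 statements merged into one kernel-verified Lean document; each statement's English description precedes it below -/
import Mathlib

section
/- Soundness of abstraction: let φ and ψ be propositional formulas over a finite variable set V, and let W be any collection of subsets of V. If for every valuation ν with ν ⊨ φ and ν ⊭ ψ there exists S ∈ W such that ν[S↦0] ⊨ φ and ν x = true for some x ∈ S, then φ ⊨_min ψ. -/
variable {V : Type*} [Fintype V]

/-- Pointwise order on valuations: `ν' ≤ ν` iff every variable true in `ν'` is true in `ν`. -/
def VLE (ν' ν : V → Bool) : Prop := ∀ x, ν' x = true → ν x = true

/-- `ν` is a minimal model of `φ`: it is a model and no strictly smaller valuation is a model. -/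
def IsMinimalModel (φ : (V → Bool) → Prop) (ν : V → Bool) : Prop :=
  φ ν ∧ ¬ ∃ ν', VLE ν' ν ∧ ν' ≠ ν ∧ φ ν'

/-- `φ ⊨_min ψ`: every minimal model of `φ` satisfies `ψ`. -/
def EntailsMin (φ ψ : (V → Bool) → Prop) : Prop :=
  ∀ ν, IsMinimalModel φ ν → ψ ν

/-- `ν[S↦0]`: the valuation agreeing with `ν` outside `S` and assigning `false` on `S`. -/
noncomputable def setZero (ν : V → Bool) (S : Set V) : V → Bool :=
  fun x => @ite _ (x ∈ S) (Classical.propDecidable _) false (ν x)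

/-- `x` is free for negation in `φ`: every minimal model of `φ` assigns `false` to `x`. -/
def FreeForNegation (φ : (V → Bool) → Prop) (x : V) : Prop :=
  ∀ ν, IsMinimalModel φ ν → ν x = false

theorem stmt_3 (φ ψ : (V → Bool) → Prop) (W : Set (Set V))
    (h : ∀ ν : V → Bool, φ ν → ¬ ψ ν →
      ∃ S ∈ W, φ (setZero ν S) ∧ ∃ x ∈ S, ν x = true) :
    EntailsMin φ ψ := by
  intro ν hmin
  by_contra hψ
  obtain ⟨S, _, hφ', x, hxS, hx⟩ := h ν hmin.1 hψ
  exact hmin.2 ⟨setZero ν S, by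
    intro y hy
    by_cases hyS : y ∈ S
    · simp [setZero, hyS] at hy
    · simpa [setZero, hyS] using hy,
    by
      intro heq
      have := congrFun heq x
      simp [setZero, hxS, hx] at this,
    hφ'⟩
end

section
/- Let φ be a propositional formula over a finite variable set V and let x ∈ V. Then x is free for negation in φ if and only if for every valuation ν with ν ⊨ φ and ν x = true there exists a set S ⊆ V with x ∈ S such that ν[S↦0] ⊨ φ. (This is the semantic content of the tautology (φ ∧ x) ⇒ ⋁_{S ⊆ V, x ∈ S} φ[S↦0].) -/
variable {V : Type*} [Fintype V]

private lemma exists_min_below (φ : (V → Bool) → Prop) :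
    ∀ n (ν : V → Bool), (Finset.filter (fun y => ν y = true) Finset.univ).card ≤ n →
      φ ν → ∃ μ, VLE μ ν ∧ IsMinimalModel φ μ := by
  intro n
  induction n with
  | zero =>
    intro ν hc hφ
    refine ⟨ν, fun y h => h, hφ, ?_⟩
    rintro ⟨ν', hle, hne, _⟩
    apply hne
    funext y
    have hν : ν y = false := by
      by_contra h
      simp only [Bool.not_eq_false] at h
      have : y ∈ Finset.filter (fun y => ν y = true) Finset.univ := by
        simp [h]
      have := Finset.card_pos.mpr ⟨y, this⟩
      omega
    cases h' : ν' y with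
    | false => rw [hν]
    | true => exact absurd (hle y h') (by simp [hν])
  | succ n ih =>
    intro ν hc hφ
    by_cases hmin : IsMinimalModel φ ν
    · exact ⟨ν, fun y h => h, hmin⟩
    · have : ∃ ν', VLE ν' ν ∧ ν' ≠ ν ∧ φ ν' := by
        by_contra h
        exact hmin ⟨hφ, h⟩
      obtain ⟨ν', hle, hne, hφ'⟩ := this
      have hss : Finset.filter (fun y => ν' y = true) Finset.univ ⊂
          Finset.filter (fun y => ν y = true) Finset.univ := by
        constructor
        · intro y hy
          simp only [Finset.mem_filter, Finset.mem_univ, true_and] at hy ⊢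
          exact hle y hy
        · intro hsub
          apply hne
          funext y
          cases h' : ν' y with
          | true => exact (hle y h').symm
          | false =>
            by_contra h
            have hνy : ν y = true := by
              cases hν : ν y <;> simp_all
            have : y ∈ Finset.filter (fun y => ν' y = true) Finset.univ :=
              hsub (by simp [hνy])
            simp [h'] at this
      have hc' : (Finset.filter (fun y => ν' y = true) Finset.univ).card ≤ n := by
        have := Finset.card_lt_card hss
        omega
      obtain ⟨μ, hμle, hμmin⟩ := ih ν' hc' hφ'
      exact ⟨μ, fun y h => hle y (hμle y h), hμmin⟩

theorem stmt_6 (φ : (V → Bool) → Prop) (x : V) :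
    FreeForNegation φ x ↔
      ∀ ν : V → Bool, φ ν → ν x = true →
        ∃ S : Set V, x ∈ S ∧ φ (setZero ν S) := by
  constructor
  · intro hfree ν hφ hx
    obtain ⟨μ, hle, hmin⟩ := exists_min_below φ _ ν le_rfl hφ
    refine ⟨{y | ν y = true ∧ μ y = false}, ⟨hx, hfree μ hmin⟩, ?_⟩
    have : setZero ν {y | ν y = true ∧ μ y = false} = μ := by
      funext y
      simp only [setZero, Set.mem_setOf_eq]
      split
      · next h => exact h.2.symm
      · next h =>
        push_neg at h
        cases hν : ν y with
        | false =>
          cases hμ : μ y with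
          | false => rfl
          | true => exact absurd (hle y hμ) (by simp [hν])
        | true =>
          have := h hν
          simp only [Bool.not_eq_false] at this
          rw [this]
    rw [this]; exact hmin.1
  · intro h ν hmin
    by_contra hx
    have hx' : ν x = true := by
      cases hν : ν x with
      | false => exact absurd hν hx
      | true => rfl
    obtain ⟨S, hxS, hφS⟩ := h ν hmin.1 hx'
    apply hmin.2
    refine ⟨setZero ν S, ?_, ?_, hφS⟩
    · intro y hy
      simp only [setZero] at hy
      split at hy
      · exact absurd hy (by simp)
      · exact hy
    · intro heq
      have : setZero ν S x = ν x := congrFun heq x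
      simp only [setZero, if_pos hxS] at this
      rw [hx'] at this
      exact Bool.false_ne_true this
end

section
/- Soundness of abstraction for free-for-negation: let φ be a propositional formula over a finite variable set V, let x ∈ V, and let W be a collection of subsets of V each of which contains x. If for every valuation ν with ν ⊨ φ and ν x = true there exists S ∈ W such that ν[S↦0] ⊨ φ, then x is free for negation in φ. -/
variable {V : Type*} [Fintype V]

theorem stmt_7 (φ : (V → Bool) → Prop) (x : V) (W : Set (Set V))
    (hW : ∀ S ∈ W, x ∈ S)
    (h : ∀ ν : V → Bool, φ ν → ν x = true → ∃ S ∈ W, φ (setZero ν S)) :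
    FreeForNegation φ x := by
  intro ν hmin
  by_contra hx
  have hxt : ν x = true := by
    cases hv : ν x with
    | false => exact absurd hv hx
    | true => rfl
  obtain ⟨S, hS, hφ⟩ := h ν hmin.1 hxt
  exact hmin.2 ⟨setZero ν S, fun y hy => by
      by_cases hyS : y ∈ S
      · simp [setZero, hyS] at hy
      · simpa [setZero, hyS] using hy,
    fun he => by
      have : setZero ν S x = ν x := congrFun he x
      simp [setZero, hW S hS, hxt] at this,
    hφ⟩
end

section
/- Let φ be a propositional formula over a finite variable set V and let x, y ∈ V. If x is free for negation in φ (every minimal model of φ assigns false to x), then y is free for negation in the formula φ ∧ ¬x (whose models are the models ν of φ with ν x = false) if and only if y is free for negation in φ. -/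
variable {V : Type*} [Fintype V]

theorem stmt_9 (φ : (V → Bool) → Prop) (x y : V)
    (hx : FreeForNegation φ x) :
    FreeForNegation (fun ν => φ ν ∧ ν x = false) y ↔ FreeForNegation φ y := by
  have key : ∀ ν, IsMinimalModel (fun ν => φ ν ∧ ν x = false) ν ↔ IsMinimalModel φ ν := by
    intro ν
    constructor
    · rintro ⟨⟨hφ, hxf⟩, hmin⟩
      refine ⟨hφ, ?_⟩
      rintro ⟨ν', hle, hne, hφ'⟩
      have hx' : ν' x = false := by
        cases h : ν' x with
        | false => rfl
        | true => exact absurd (hle x h) (by simp [hxf])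
      exact hmin ⟨ν', hle, hne, hφ', hx'⟩
    · rintro ⟨hφ, hmin⟩
      have hxf : ν x = false := hx ν ⟨hφ, hmin⟩
      refine ⟨⟨hφ, hxf⟩, ?_⟩
      rintro ⟨ν', hle, hne, hφ', _⟩
      exact hmin ⟨ν', hle, hne, hφ'⟩
  constructor
  · intro h ν hm
    exact h ν ((key ν).mpr hm)
  · intro h ν hm
    exact h ν ((key ν).mp hm)
end

section
/- Progress of CEGAR refinement: let φ and ψ be propositional formulas over a finite variable set V, and let W be a collection of subsets of V. Suppose ν is a valuation with ν ⊨ φ and ν ⊭ ψ such that for every S ∈ W it is not the case that both ν[S↦0] ⊨ φ and ν x = true for some x ∈ S. If ν' is a model of φ with ν' ≤ ν and ν' ≠ ν, then the set S₀ := { x ∈ V | ν x = true and ν' x = false } satisfies ν[S₀↦0] = ν', S₀ is nonempty with ν x = true for every x ∈ S₀, and S₀ ∉ W. -/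
variable {V : Type*} [Fintype V]

theorem stmt_11 (φ ψ : (V → Bool) → Prop) (W : Set (Set V)) (ν ν' : V → Bool)
    (hν : φ ν) (hψ : ¬ ψ ν)
    (hW : ∀ S ∈ W, ¬ (φ (setZero ν S) ∧ ∃ x ∈ S, ν x = true))
    (hν' : φ ν') (hle : VLE ν' ν) (hne : ν' ≠ ν) :
    setZero ν {x : V | ν x = true ∧ ν' x = false} = ν' ∧
    ({x : V | ν x = true ∧ ν' x = false}).Nonempty ∧
    (∀ x ∈ {x : V | ν x = true ∧ ν' x = false}, ν x = true) ∧
    {x : V | ν x = true ∧ ν' x = false} ∉ W := by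
  have heq : setZero ν {x : V | ν x = true ∧ ν' x = false} = ν' := by
    funext x
    simp only [setZero, Set.mem_setOf_eq]
    split
    · next h => exact h.2.symm
    · next h =>
      cases hx : ν' x with
      | true => exact (hle x hx).symm ▸ rfl
      | false =>
        cases hnx : ν x with
        | true => exact absurd ⟨hnx, hx⟩ h
        | false => rfl
  have hne' : ({x : V | ν x = true ∧ ν' x = false}).Nonempty := by
    by_contra h
    rw [Set.not_nonempty_iff_eq_empty] at h
    apply hne
    funext x
    cases hx : ν' x with
    | true => exact (hle x hx).symm ▸ rfl
    | false =>
      cases hnx : ν x with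
      | true => exact absurd (Set.eq_empty_iff_forall_notMem.mp h x) (by simp [hnx, hx])
      | false => rfl
  refine ⟨heq, hne', fun x hx => hx.1, fun hmem => ?_⟩
  obtain ⟨x, hx⟩ := hne'
  exact hW _ hmem ⟨heq.symm ▸ hν', x, hx, hx.1⟩
end
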